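/- Let G be the graph with vertex set A₁ ∪ A₂ ∪ S, where A₁ = {a₁ʲ : 1 ≤ j ≤ n}, A₂ = {a₂ʲ : 1 ≤ j ≤ n}, S = {sʲ : 1 ≤ j ≤ n}, where A₁ and A₂ are cliques, S is an independent set, and the only other edges are sʲa₁ʲ and sʲa₂ʲ for each j. Then G is P₈-free. -/

import Mathlib

open SimpleGraph Set

variable {V : Type*}

/-- Open neighborhood of a set: vertices outside `A` with a neighbor in `A`. -/
def nbhdSet (G : SimpleGraph V) (A : Set V) : Set V :=
  {v | v ∉ A ∧ ∃ u ∈ A, G.Adj u v}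

/-- Union of closed neighborhoods of vertices of `X`. -/
def closedNbhd (G : SimpleGraph V) (X : Set V) : Set V :=
  X ∪ {v | ∃ u ∈ X, G.Adj u v}

/-- `A` is a connected component of `G - S`. -/
def IsCompOutside (G : SimpleGraph V) (S A : Set V) : Prop :=
  A.Nonempty ∧ Disjoint A S ∧ (G.induce A).Connected ∧
    ∀ u ∈ A, ∀ v, v ∉ A → v ∉ S → ¬ G.Adj u v

/-- `A` is a full component of `G - S`, i.e. `N(A) = S`. -/
def IsFullComp (G : SimpleGraph V) (S A : Set V) : Prop :=
  IsCompOutside G S A ∧ nbhdSet G A = S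

/-- `S` is a minimal separator: it has at least two full components. -/
def IsMinSep (G : SimpleGraph V) (S : Set V) : Prop :=
  ∃ A B : Set V, A ≠ B ∧ IsFullComp G S A ∧ IsFullComp G S B

/-- `f` is an induced copy of the path on `k` vertices in `G`. -/
def IsInducedPathMap (G : SimpleGraph V) {k : ℕ} (f : Fin k ↪ V) : Prop :=
  ∀ i j : Fin k, G.Adj (f i) (f j) ↔ ((i : ℕ) + 1 = (j : ℕ) ∨ (j : ℕ) + 1 = (i : ℕ))

/-- `G` is `P_t`-free: no induced path on `t` vertices. -/
def PFree (t : ℕ) (G : SimpleGraph V) : Prop :=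
  ¬ ∃ f : Fin t ↪ V, IsInducedPathMap G f

/-- `Ω` is a potential maximal clique. -/
def IsPMC (G : SimpleGraph V) (Ω : Set V) : Prop :=
  (∀ D : Set V, IsCompOutside G Ω D → nbhdSet G D ≠ Ω) ∧
  (∀ u ∈ Ω, ∀ v ∈ Ω, u ≠ v → ¬ G.Adj u v →
    ∃ D : Set V, IsCompOutside G Ω D ∧ u ∈ nbhdSet G D ∧ v ∈ nbhdSet G D)

/-- Vertex set: `A₁ ⊕ A₂ ⊕ S`, each a copy of `Fin n`. -/
abbrev ExV (n : ℕ) := Fin n ⊕ Fin n ⊕ Fin n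

/-- Adjacency: `A₁` and `A₂` are cliques, `S` is independent, and `sʲ` is adjacent
exactly to `a₁ʲ` and `a₂ʲ`. -/
def exAdj (n : ℕ) : ExV n → ExV n → Prop
  | Sum.inl i, Sum.inl j => i ≠ j
  | Sum.inr (Sum.inl i), Sum.inr (Sum.inl j) => i ≠ j
  | Sum.inl i, Sum.inr (Sum.inr j) => i = j
  | Sum.inr (Sum.inr i), Sum.inl j => i = j
  | Sum.inr (Sum.inl i), Sum.inr (Sum.inr j) => i = j
  | Sum.inr (Sum.inr i), Sum.inr (Sum.inl j) => i = j
  | _, _ => False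

def exGraph (n : ℕ) : SimpleGraph (ExV n) where
  Adj := exAdj n
  symm := by
    refine ⟨?_⟩
    rintro (i | i | i) (j | j | j) h <;> simp only [exAdj] at h ⊢ <;> omega
  loopless := by
    refine ⟨?_⟩
    rintro (i | i | i) h <;> simp only [exAdj] at h <;> omega

def ExA1 (n : ℕ) : Set (ExV n) := Set.range Sum.inl
def ExA2 (n : ℕ) : Set (ExV n) := Set.range (fun j => Sum.inr (Sum.inl j))
def ExS (n : ℕ) : Set (ExV n) := Set.range (fun j => Sum.inr (Sum.inr j))

lemma keyLemma (g : Fin 8 → Fin 3)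
    (h0 : ∀ i j : Fin 8, i ≠ j → g i = 0 → g j = 0 → ((i:ℕ)+1 = j ∨ (j:ℕ)+1 = i))
    (h1 : ∀ i j : Fin 8, i ≠ j → g i = 1 → g j = 1 → ((i:ℕ)+1 = j ∨ (j:ℕ)+1 = i))
    (h2 : ∀ i j : Fin 8, i ≠ j → g i = 2 → g j = 2 → ((i:ℕ)+3 ≤ j ∨ (j:ℕ)+3 ≤ i)) :
    False := by
  classical
  set s0 := Finset.univ.filter (fun i => g i = 0) with hs0
  set s1 := Finset.univ.filter (fun i => g i = 1) with hs1
  set s2 := Finset.univ.filter (fun i => g i = 2) with hs2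
  have c0 : s0.card ≤ 2 := by
    by_contra h
    push_neg at h
    obtain ⟨a, b, c, ha, hb, hc, hab, hac, hbc⟩ := Finset.two_lt_card_iff.mp h
    simp only [hs0, Finset.mem_filter, Finset.mem_univ, true_and] at ha hb hc
    have t1 := h0 a b hab ha hb
    have t2 := h0 a c hac ha hc
    have t3 := h0 b c hbc hb hc
    omega
  have c1 : s1.card ≤ 2 := by
    by_contra h
    push_neg at h
    obtain ⟨a, b, c, ha, hb, hc, hab, hac, hbc⟩ := Finset.two_lt_card_iff.mp h
    simp only [hs1, Finset.mem_filter, Finset.mem_univ, true_and] at ha hb hc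
    have t1 := h1 a b hab ha hb
    have t2 := h1 a c hac ha hc
    have t3 := h1 b c hbc hb hc
    omega
  have c2 : s2.card ≤ 3 := by
    have hle : s2.card ≤ (Finset.univ : Finset (Fin 3)).card := by
      apply Finset.card_le_card_of_injOn (fun i : Fin 8 => (⟨(i:ℕ)/3, by have := i.isLt; omega⟩ : Fin 3))
      · intro i _; exact Finset.mem_univ _
      · intro a ha b hb hfab
        simp only [hs2, Finset.coe_filter, Set.mem_setOf_eq, Finset.mem_univ, true_and] at ha hb
        by_contra hne
        have := h2 a b hne ha hb
        have hv : (a:ℕ)/3 = (b:ℕ)/3 := congrArg Fin.val hfab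
        omega
    simpa using hle
  have cover : (Finset.univ : Finset (Fin 8)) ⊆ s0 ∪ s1 ∪ s2 := by
    intro i _
    have : g i = 0 ∨ g i = 1 ∨ g i = 2 := by omega
    simp only [hs0, hs1, hs2, Finset.mem_union, Finset.mem_filter, Finset.mem_univ, true_and]
    tauto
  have h8 : (8:ℕ) ≤ (s0 ∪ s1 ∪ s2).card := by
    have := Finset.card_le_card cover
    simpa using this
  have hu1 := Finset.card_union_le (s0 ∪ s1) s2
  have hu2 := Finset.card_union_le s0 s1
  omega

/-- The concrete graph `exGraph n` is `P₈`-free. -/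
theorem stmt_6 (n : ℕ) : PFree 8 (exGraph n) := by
  rintro ⟨f, hf⟩
  set g : Fin 8 → Fin 3 := fun i =>
    Sum.elim (fun _ => 0) (Sum.elim (fun _ => 1) (fun _ => 2)) (f i) with hg
  -- no two S-vertices at distance exactly 2
  have key2 : ∀ i j : Fin 8, (i:ℕ)+2 = (j:ℕ) →
      (∃ a, f i = Sum.inr (Sum.inr a)) → (∃ b, f j = Sum.inr (Sum.inr b)) → False := by
    rintro i j hij2 ⟨a, hfi⟩ ⟨b, hfj⟩
    have hjlt := j.isLt
    have hm : (i:ℕ)+1 < 8 := by omega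
    set m : Fin 8 := ⟨(i:ℕ)+1, hm⟩ with hmdef
    have hadj1 : (exGraph n).Adj (f i) (f m) := (hf i m).mpr (Or.inl rfl)
    have hadj2 : (exGraph n).Adj (f m) (f j) := (hf m j).mpr (Or.inl (by
      show (m:ℕ)+1 = (j:ℕ); simp [hmdef]; omega))
    rcases hfm : f m with c | c | c <;> rw [hfi, hfm] at hadj1 <;> rw [hfm, hfj] at hadj2
    · have e1 : a = c := hadj1
      have e2 : c = b := hadj2
      have : f i = f j := by rw [hfi, hfj, e1, e2]
      have := congrArg Fin.val (f.injective this)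
      omega
    · have e1 : a = c := hadj1
      have e2 : c = b := hadj2
      have : f i = f j := by rw [hfi, hfj, e1, e2]
      have := congrArg Fin.val (f.injective this)
      omega
    · exact hadj1
  apply keyLemma g
  · intro i j hij hgi hgj
    rcases hfi : f i with a | a | a <;> rcases hfj : f j with b | b | b <;>
      simp only [hg, hfi, hfj, Sum.elim_inl, Sum.elim_inr] at hgi hgj <;>
      try exact absurd hgi (by decide)
    all_goals try exact absurd hgj (by decide)
    have hab : a ≠ b := fun h => hij (f.injective (by rw [hfi, hfj, h]))
    exact (hf i j).mp (by rw [hfi, hfj]; exact hab)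
  · intro i j hij hgi hgj
    rcases hfi : f i with a | a | a <;> rcases hfj : f j with b | b | b <;>
      simp only [hg, hfi, hfj, Sum.elim_inl, Sum.elim_inr] at hgi hgj <;>
      try exact absurd hgi (by decide)
    all_goals try exact absurd hgj (by decide)
    have hab : a ≠ b := fun h => hij (f.injective (by rw [hfi, hfj, h]))
    exact (hf i j).mp (by rw [hfi, hfj]; exact hab)
  · intro i j hij hgi hgj
    rcases hfi : f i with a | a | a <;> rcases hfj : f j with b | b | b <;>
      simp only [hg, hfi, hfj, Sum.elim_inl, Sum.elim_inr] at hgi hgj <;>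
      try exact absurd hgi (by decide)
    all_goals try exact absurd hgj (by decide)
    have hvne : (i:ℕ) ≠ (j:ℕ) := fun h => hij (Fin.ext h)
    have hnadj : ¬ (exGraph n).Adj (f i) (f j) := by
      rw [hfi, hfj]; exact fun h => h
    have hne1 : ¬(((i:ℕ)+1 = j) ∨ ((j:ℕ)+1 = i)) := fun h => hnadj ((hf i j).mpr h)
    have hne2 : ¬((i:ℕ)+2 = (j:ℕ)) := fun h => key2 i j h ⟨a, hfi⟩ ⟨b, hfj⟩
    have hne2' : ¬((j:ℕ)+2 = (i:ℕ)) := fun h => key2 j i h ⟨b, hfj⟩ ⟨a, hfi⟩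
    omega
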